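/- Let (Ω, F, T) be a measurable system, V a continuous T-invariant upper probability, and P, P₀ probabilities dominated by V with P₀ T-invariant and P = P₀ on the invariant σ-algebra I. Then P is absolutely continuous with respect to P₀. -/

import Mathlib

open MeasureTheory Filter Function Topology

theorem stmt19 {Ω : Type*} [MeasurableSpace Ω] (T : Ω → Ω) (hT : Measurable T)
    (Θ : Set (Measure Ω)) (hprob : ∀ Q ∈ Θ, IsProbabilityMeasure Q)
    -- continuity of the upper probability `V = ⨆_{Q ∈ Θ} Q`
    (hcont : ∀ A : ℕ → Set Ω, (∀ n, MeasurableSet (A n)) → Antitone A →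
      (⋂ n, A n) = ∅ →
      Tendsto (fun n => ⨆ Q : Θ, Q.1 (A n)) atTop (𝓝 (0 : ENNReal)))
    -- `T`-invariance of the upper probability
    (hVinv : ∀ A : Set Ω, MeasurableSet A →
      (⨆ Q : Θ, Q.1 (T ⁻¹' A)) = ⨆ Q : Θ, Q.1 A)
    (P P0 : Measure Ω) (hP : P ∈ Θ) (hP0 : P0 ∈ Θ)
    (hP0inv : Measure.map T P0 = P0)
    (hagree : ∀ A : Set Ω, MeasurableSet A → T ⁻¹' A = A → P A = P0 A) :
    P ≪ P0 := by
  have hPprob := hprob P hP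
  have hP0prob := hprob P0 hP0
  refine Measure.AbsolutelyContinuous.mk ?_
  intro N hN hN0
  -- iterated invariance of P0
  have hmap : ∀ k : ℕ, Measure.map (T^[k]) P0 = P0 := by
    intro k
    induction k with
    | zero => simp
    | succ k ih =>
      rw [Function.iterate_succ', ← Measure.map_map hT (hT.iterate k), ih, hP0inv]
  set A : ℕ → Set Ω := fun n => ⋂ k : ℕ, T^[n + k] ⁻¹' Nᶜ with hAdef
  have hAm : ∀ n, MeasurableSet (A n) :=
    fun n => MeasurableSet.iInter fun k => (hT.iterate _) hN.compl
  have hAmono : Monotone A := by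
    refine monotone_nat_of_le_succ fun n x hx => ?_
    rw [Set.mem_iInter] at hx ⊢
    intro k
    have h := hx (k + 1)
    rwa [show n + (k + 1) = n + 1 + k by omega] at h
  have hpre : ∀ n, T ⁻¹' A n = A (n + 1) := by
    intro n
    ext x
    simp only [hAdef, Set.mem_preimage, Set.mem_iInter, Set.mem_compl_iff]
    constructor
    · intro h k
      have := h k
      rwa [← Function.iterate_succ_apply, show (n + k).succ = n + 1 + k by omega] at this
    · intro h k
      have := h k
      rwa [show n + 1 + k = (n + k).succ by omega, Function.iterate_succ_apply] at this
  set Abig : Set Ω := ⋃ n, A n with hAbigdef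
  have hAbigm : MeasurableSet Abig := MeasurableSet.iUnion hAm
  have hAbiginv : T ⁻¹' Abig = Abig := by
    rw [hAbigdef, Set.preimage_iUnion]
    simp_rw [hpre]
    apply Set.Subset.antisymm
    · exact Set.iUnion_mono' fun n => ⟨n + 1, subset_rfl⟩
    · exact Set.iUnion_mono' fun n => ⟨n, hAmono (Nat.le_succ n)⟩
  have hA0c : P0 ((A 0)ᶜ) = 0 := by
    have hco : (A 0)ᶜ = ⋃ k, T^[k] ⁻¹' N := by
      simp [hAdef, Set.compl_iInter, Set.preimage_compl]
    rw [hco]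
    refine measure_iUnion_null fun k => ?_
    have h1 : P0 (T^[k] ⁻¹' N) = (Measure.map (T^[k]) P0) N :=
      (Measure.map_apply (hT.iterate k) hN).symm
    rw [h1, hmap k, hN0]
  have hP0Abig : P0 Abig = 1 := by
    have h0 : P0 (Abigᶜ) = 0 :=
      measure_mono_null (Set.compl_subset_compl.mpr (Set.subset_iUnion A 0)) hA0c
    exact (prob_compl_eq_zero_iff hAbigm).mp h0
  have hPAbig : P Abig = 1 := by
    rw [hagree Abig hAbigm hAbiginv, hP0Abig]
  have hPAbigc : P (Abigᶜ) = 0 := (prob_compl_eq_zero_iff hAbigm).mpr hPAbig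
  set D : ℕ → Set Ω := fun n => Abig ∩ (A n)ᶜ with hDdef
  have hDm : ∀ n, MeasurableSet (D n) := fun n => hAbigm.inter (hAm n).compl
  have hDanti : Antitone D := fun m n h =>
    Set.inter_subset_inter_right _ (Set.compl_subset_compl.mpr (hAmono h))
  have hDempty : (⋂ n, D n) = ∅ := by
    rw [hDdef]
    rw [← Set.inter_iInter, ← Set.compl_iUnion, ← hAbigdef, Set.inter_compl_self]
  have htend := hcont D hDm hDanti hDempty
  have hpreD : ∀ n, T ⁻¹' D n = D (n + 1) := by
    intro n
    rw [hDdef]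
    simp only [Set.preimage_inter, Set.preimage_compl, hAbiginv, hpre]
  have hVD : ∀ n, (⨆ Q : Θ, Q.1 (D n)) = ⨆ Q : Θ, Q.1 (D 0) := by
    intro n
    induction n with
    | zero => rfl
    | succ n ih =>
      rw [← ih, ← hVinv (D n) (hDm n), hpreD n]
  -- lower bound: P N ≤ V (D n) for all n
  have hsub : N ⊆ (A 0)ᶜ := by
    intro x hx hxA
    rw [Set.mem_iInter] at hxA
    exact hxA 0 hx
  have hPlow : P N ≤ P (D 0) := by
    have h1 : (A 0)ᶜ ⊆ D 0 ∪ Abigᶜ := by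
      intro x hx
      by_cases hxb : x ∈ Abig
      · exact Or.inl ⟨hxb, hx⟩
      · exact Or.inr hxb
    calc P N ≤ P ((A 0)ᶜ) := measure_mono hsub
      _ ≤ P (D 0 ∪ Abigᶜ) := measure_mono h1
      _ ≤ P (D 0) + P (Abigᶜ) := measure_union_le _ _
      _ = P (D 0) := by rw [hPAbigc, add_zero]
  have hlow : ∀ n, P N ≤ ⨆ Q : Θ, Q.1 (D n) := by
    intro n
    rw [hVD n]
    exact hPlow.trans (le_iSup (fun Q : Θ => Q.1 (D 0)) ⟨P, hP⟩)
  have : P N ≤ 0 := ge_of_tendsto' htend hlow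
  exact le_antisymm this zero_le
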